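/- For any c > 0 and bounds k̄_d > c and k̄_p > (c/4)·k̄_d²/(k̄_d − c), there exist symmetric positive definite matrices K_d, K_p with λ_max(K_d) ≤ k̄_d and λ_max(K_p) ≤ k̄_p such that the block matrix Λ(K_d,K_p,c) = [[K_d − cI, (c/2)K_d], [(c/2)K_d, cK_p]] is positive definite. (For instance K_d = k̄_d·I and K_p = k̄_p·I work.) -/

import Mathlib

open Matrix

noncomputable def lamMax {N : Type*} [Fintype N] [DecidableEq N] (A : Matrix N N ℝ) : ℝ :=
  if h : A.IsHermitian then ⨆ i, h.eigenvalues i else 0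

lemma posDef_smul_one {n:ℕ} {r:ℝ} (hr:0<r) : ((r • 1 : Matrix (Fin n) (Fin n) ℝ)).PosDef := by
  refine Matrix.PosDef.of_dotProduct_mulVec_pos (by simp [Matrix.IsHermitian]) fun x hx => ?_
  rw [smul_mulVec, one_mulVec, dotProduct_smul]
  exact mul_pos hr (Matrix.dotProduct_star_self_pos_iff.mpr hx)

lemma eig_smul_one {n:ℕ} {r:ℝ} (h : (r • 1 : Matrix (Fin n) (Fin n) ℝ).IsHermitian) (i : Fin n) :
    h.eigenvalues i = r := by
  have hv := h.mulVec_eigenvectorBasis i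
  rw [smul_mulVec, one_mulVec] at hv
  have hne : h.eigenvectorBasis i ≠ 0 := (h.eigenvectorBasis).orthonormal.ne_zero i
  have h2 : (r - h.eigenvalues i) • ((WithLp.equiv 2 _) (h.eigenvectorBasis i)) = 0 := by
    rw [sub_smul]
    exact sub_eq_zero.mpr hv
  rcases smul_eq_zero.mp h2 with h1 | h1
  · linarith [sub_eq_zero.mp h1]
  · exact absurd ((WithLp.equiv 2 _).injective (by simpa using h1)) hne

lemma lamMax_smul_one {n:ℕ} (hn : 0 < n) {r:ℝ} :
    lamMax (r • 1 : Matrix (Fin n) (Fin n) ℝ) = r := by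
  haveI : Nonempty (Fin n) := Fin.pos_iff_nonempty.mp hn
  have h : (r • 1 : Matrix (Fin n) (Fin n) ℝ).IsHermitian := by simp [Matrix.IsHermitian]
  rw [lamMax, dif_pos h]
  simp [eig_smul_one h, ciSup_const]

lemma block_posDef {n:ℕ} {a b d : ℝ} (ha : 0 < a) (hd : 0 < d) (hb : b^2 < a*d) :
    (Matrix.fromBlocks (a • 1) (b • 1) (b • 1) (d • 1) :
      Matrix (Fin n ⊕ Fin n) (Fin n ⊕ Fin n) ℝ).PosDef := by
  apply Matrix.PosDef.of_dotProduct_mulVec_pos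
  · show _ = _
    rw [Matrix.conjTranspose_eq_transpose_of_trivial, Matrix.fromBlocks_transpose]
    simp [Matrix.transpose_smul]
  · intro x hx
    set u : Fin n → ℝ := x ∘ Sum.inl with hu
    set v : Fin n → ℝ := x ∘ Sum.inr with hvv
    have hkey : star x ⬝ᵥ ((Matrix.fromBlocks (a • 1) (b • 1) (b • 1) (d • 1) :
        Matrix (Fin n ⊕ Fin n) (Fin n ⊕ Fin n) ℝ) *ᵥ x) =
        a * (u ⬝ᵥ u) + 2*b*(u ⬝ᵥ v) + d * (v ⬝ᵥ v) := by
      rw [star_trivial, Matrix.fromBlocks_mulVec, Matrix.dotProduct_block]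
      simp only [Sum.elim_comp_inl, Sum.elim_comp_inr, smul_mulVec, one_mulVec,
        dotProduct_add, dotProduct_smul, smul_eq_mul, ← hu, ← hvv]
      rw [dotProduct_comm v u]
      ring
    rw [hkey]
    set s := u ⬝ᵥ u with hs
    set t := v ⬝ᵥ v with ht
    set p := u ⬝ᵥ v with hp
    have hcs : p^2 ≤ s * t := by
      have h := Finset.sum_mul_sq_le_sq_mul_sq Finset.univ u v
      have hs' : s = ∑ i, u i^2 := by simp [hs, dotProduct, sq]
      have ht' : t = ∑ i, v i^2 := by simp [ht, dotProduct, sq]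
      rw [hs', ht', hp]
      exact h
    have hs0 : 0 ≤ s := by
      simpa [hs, dotProduct] using Finset.sum_nonneg fun i _ => mul_self_nonneg (u i)
    have ht0 : 0 ≤ t := by
      simpa [ht, dotProduct] using Finset.sum_nonneg fun i _ => mul_self_nonneg (v i)
    have hne : u ≠ 0 ∨ v ≠ 0 := by
      by_contra h
      push_neg at h
      apply hx
      funext i
      cases i with
      | inl i => exact congrFun h.1 i
      | inr i => exact congrFun h.2 i
    have hst : 0 < s ∨ 0 < t := by
      rcases hne with h | h
      · left
        have := Matrix.dotProduct_star_self_pos_iff (v := u) |>.mpr h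
        simpa [hs] using this
      · right
        have := Matrix.dotProduct_star_self_pos_iff (v := v) |>.mpr h
        simpa [ht] using this
    have hab : 0 < a*d - b^2 := by linarith
    rcases hst with h | h
    · have h4 : d^2*p^2 ≤ d^2*(s*t) := mul_le_mul_of_nonneg_left hcs (sq_nonneg d)
      have h5 : 0 < (a*d-b^2)*s^2 := mul_pos hab (pow_pos h 2)
      have h3 : 0 < (d*s) * (a*s + 2*b*p + d*t) := by
        nlinarith [sq_nonneg (d*p + b*s)]
      by_contra hQ
      push_neg at hQ
      nlinarith [mul_nonpos_of_nonneg_of_nonpos (mul_pos hd h).le hQ]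
    · have h4 : a^2*p^2 ≤ a^2*(s*t) := mul_le_mul_of_nonneg_left hcs (sq_nonneg a)
      have h5 : 0 < (a*d-b^2)*t^2 := mul_pos hab (pow_pos h 2)
      have h3 : 0 < (a*t) * (a*s + 2*b*p + d*t) := by
        nlinarith [sq_nonneg (a*p + b*t)]
      by_contra hQ
      push_neg at hQ
      nlinarith [mul_nonpos_of_nonneg_of_nonpos (mul_pos ha h).le hQ]

theorem exists_bounded_gains_posdef (n : ℕ) (hn : 0 < n) (c kd kp : ℝ)
    (hc : 0 < c) (hkd : c < kd) (hkp : (c / 4) * kd ^ 2 / (kd - c) < kp) :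
    ∃ Kd Kp : Matrix (Fin n) (Fin n) ℝ, Kd.PosDef ∧ Kp.PosDef ∧
      lamMax Kd ≤ kd ∧ lamMax Kp ≤ kp ∧
      (Matrix.fromBlocks (Kd - c • 1) ((c / 2) • Kd) ((c / 2) • Kd) (c • Kp)).PosDef := by
  have hac : 0 < kd - c := by linarith
  have hkd0 : 0 < kd := lt_trans hc hkd
  have hkp0 : 0 < kp :=
    lt_trans (div_pos (mul_pos (by linarith) (pow_pos hkd0 2)) hac) hkp
  refine ⟨kd • 1, kp • 1, posDef_smul_one (by linarith), posDef_smul_one hkp0,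
    le_of_eq (lamMax_smul_one hn), le_of_eq (lamMax_smul_one hn), ?_⟩
  have e1 : (kd • 1 - c • 1 : Matrix (Fin n) (Fin n) ℝ) = (kd - c) • 1 := by
    rw [sub_smul]
  have e2 : ((c/2) • (kd • 1) : Matrix (Fin n) (Fin n) ℝ) = (c/2*kd) • 1 := by
    rw [smul_smul]
  have e3 : (c • (kp • 1) : Matrix (Fin n) (Fin n) ℝ) = (c*kp) • 1 := by
    rw [smul_smul]
  rw [e1, e2, e3]
  apply block_posDef hac (by positivity)
  have : (c/4) * kd^2 < kp * (kd - c) := by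
    rw [div_lt_iff₀ hac] at hkp
    linarith
  nlinarith [mul_lt_mul_of_pos_left this hc]
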